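/- Let F be a presheaf of abelian groups on a site that is a Nisnevich sheaf, and suppose that on a scheme X with closed subscheme Z and open complement U (and similarly after base change), one has direct sum decompositions C(X) = C(Z) ⊕ C(U) of the associated groups compatible with restrictions. Then the presheaf U ↦ C(U) on the small Nisnevich site of X satisfies the sheaf condition for every Nisnevich distinguished square. -/
import Mathlib


/-!
STATEMENT 14: Suppose a (Nisnevich-sheafy) theory `C` assigns abelian groups to schemes, and
for a scheme `X` with closed subscheme `Z` and open complement `U` one has direct sum
decompositions `C(X) = C(Z) ⊕ C(U)` compatible with restrictions (and similarly for an étale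
`V → X` in a Nisnevich distinguished square, with `V ∖ U_V → X ∖ U = Z` an isomorphism).
Then `C` satisfies the sheaf condition for the Nisnevich distinguished square, i.e. the square
`C(X) → C(U)`, `C(X) → C(V) → C(U_V)` is cartesian.

We formalize the algebraic content: given the restriction maps of the square
(`rU : C(X) → C(U)`, `rV : C(X) → C(V)`, `ρU : C(U) → C(U_V)`, `ρV : C(V) → C(U_V)`),
decompositions `eX : C(X) ≅ C(Z) × C(U)` and `eV : C(V) ≅ C(Z_V) × C(U_V)` whose second
components are the open restrictions, and the identification of the closed parts
(`Z ≅ Z_V`, expressed by `hZ`), the sheaf condition holds: for compatible sections over `U`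
and `V` there is a unique section over `X` restricting to them.
-/

theorem nisnevich_sheaf_condition_of_decompositions
    {CX CU CV CUV CZ : Type*}
    [AddCommGroup CX] [AddCommGroup CU] [AddCommGroup CV] [AddCommGroup CUV] [AddCommGroup CZ]
    (rU : CX →+ CU) (rV : CX →+ CV) (ρU : CU →+ CUV) (ρV : CV →+ CUV)
    (hcomm : ∀ x : CX, ρU (rU x) = ρV (rV x))
    (eX : CX ≃+ CZ × CU) (eV : CV ≃+ CZ × CUV)
    (hXU : ∀ x : CX, (eX x).2 = rU x)
    (hVU : ∀ y : CV, (eV y).2 = ρV y)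
    (hZ : ∀ x : CX, (eV (rV x)).1 = (eX x).1) :
    ∀ (a : CU) (b : CV), ρU a = ρV b → ∃! x : CX, rU x = a ∧ rV x = b := by
  intro a b hab
  refine ⟨eX.symm ((eV b).1, a), ⟨?_, ?_⟩, ?_⟩
  · have := hXU (eX.symm ((eV b).1, a))
    rw [eX.apply_symm_apply] at this
    exact this.symm
  · apply eV.injective
    apply Prod.ext
    · rw [hZ, eX.apply_symm_apply]
    · rw [hVU, hVU, ← hcomm]
      have h2 : rU (eX.symm ((eV b).1, a)) = a := by
        have := hXU (eX.symm ((eV b).1, a)); rw [eX.apply_symm_apply] at this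
        exact this.symm
      rw [h2, hab]
  · rintro y ⟨hy1, hy2⟩
    apply eX.injective
    rw [eX.apply_symm_apply]
    apply Prod.ext
    · rw [← hZ, hy2]
    · rw [hXU, hy1]
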